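/- Let β_{G,n} denote the number of G-orbits of commuting n-tuples in G under simultaneous conjugation. Then for n ≥ 1, β_{G,n} = Σ_{g} β_{Z_G(g), n−1}, where the sum runs over a set of representatives g of the conjugacy classes of G. -/
import Mathlib


/-- Number of orbits of `G` acting on `G^n` by simultaneous conjugation. -/
noncomputable def alphaOrbits (G : Type*) [Group G] (n : ℕ) : ℕ :=
  Nat.card (Quotient (MulAction.orbitRel (ConjAct G) (Fin n → G)))

/-- Pairwise commuting `n`-tuples as a sub-`MulAction` of the conjugation action. -/
def commTuples (G : Type*) [Group G] (n : ℕ) : SubMulAction (ConjAct G) (Fin n → G) where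
  carrier := {x | ∀ i j, Commute (x i) (x j)}
  smul_mem' := by
    intro g x hx i j
    have h := (hx i j).map (MulAut.conj (ConjAct.ofConjAct g)).toMonoidHom
    simpa [ConjAct.smul_def, MulAut.conj_apply, mul_assoc] using h

/-- Number of orbits of `G` acting on pairwise-commuting `n`-tuples by
simultaneous conjugation. -/
noncomputable def betaOrbits (G : Type*) [Group G] (n : ℕ) : ℕ :=
  Nat.card (Quotient (MulAction.orbitRel (ConjAct G) (commTuples G n)))

open MulAction

section
variable {G : Type*} [Group G]

lemma commTuples_smul_coe {n : ℕ} (k : ConjAct G) (x : commTuples G n) (i : Fin n) :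
    ((k • x : commTuples G n) : Fin n → G) i =
      ConjAct.ofConjAct k * (x : Fin n → G) i * (ConjAct.ofConjAct k)⁻¹ := rfl

noncomputable def firstClass {m : ℕ} :
    Quotient (orbitRel (ConjAct G) (commTuples G (m + 1))) → ConjClasses G :=
  Quotient.lift (fun x : commTuples G (m + 1) => ConjClasses.mk ((x : Fin (m+1) → G) 0)) (by
    intro a b h
    obtain ⟨k, hk⟩ := h
    rw [ConjClasses.mk_eq_mk_iff_isConj, isConj_iff]
    refine ⟨(ConjAct.ofConjAct k)⁻¹, ?_⟩
    rw [← hk, commTuples_smul_coe]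
    group)

@[simp] lemma firstClass_mk {m : ℕ} (x : commTuples G (m + 1)) :
    firstClass (Quotient.mk _ x) = ConjClasses.mk ((x : Fin (m+1) → G) 0) := rfl

end

section
variable {G : Type*} [Group G] (g : G)

abbrev cent {G : Type*} [Group G] (g : G) : Subgroup G := Subgroup.centralizer ({g} : Set G)



lemma comm_of_memZ {z : G} (hz : z ∈ (cent g)) : Commute g z :=
  (Subgroup.mem_centralizer_iff.mp hz g (Set.mem_singleton g))

def consTuple {m : ℕ} (y : commTuples (cent g) m) : commTuples G (m + 1) :=
  ⟨Fin.cons g (fun i => ((y : Fin m → (cent g)) i : G)), by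
    intro i j
    induction i using Fin.cases with
    | zero =>
      induction j using Fin.cases with
      | zero => simp
      | succ j => simpa using comm_of_memZ g ((y : Fin m → (cent g)) j).2
    | succ i =>
      induction j using Fin.cases with
      | zero => simpa using (comm_of_memZ g ((y : Fin m → (cent g)) i).2).symm
      | succ j => simpa using (y.2 i j).map (Subgroup.subtype _)⟩

@[simp] lemma consTuple_coe_zero {m : ℕ} (y : commTuples (cent g) m) :
    ((consTuple g y : commTuples G (m+1)) : Fin (m+1) → G) 0 = g := rfl

lemma consTuple_smul {m : ℕ} (z : ConjAct ↥(cent g)) (y : commTuples (cent g) m) :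
    consTuple g (z • y) =
      ConjAct.toConjAct ((ConjAct.ofConjAct z : ↥(cent g)) : G) • consTuple g y := by
  apply Subtype.ext
  funext i
  induction i using Fin.cases with
  | zero =>
    show g = _
    rw [commTuples_smul_coe, consTuple_coe_zero, ConjAct.ofConjAct_toConjAct]
    have := comm_of_memZ g (ConjAct.ofConjAct z).2
    symm
    rw [mul_assoc, this.inv_right.eq, ← mul_assoc]
    simp
  | succ i =>
    show (((z • y : commTuples (cent g) m) : Fin m → (cent g)) i : G) = _
    rw [commTuples_smul_coe]
    show ((ConjAct.ofConjAct z * (y : Fin m → (cent g)) i * (ConjAct.ofConjAct z)⁻¹ : (cent g)) : G) = _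
    push_cast
    simp [Pi.smul_apply, ConjAct.smul_def, consTuple, Fin.cons_succ]

noncomputable def classMap {m : ℕ} :
    Quotient (orbitRel (ConjAct ↥(cent g)) (commTuples (↥(cent g)) m)) →
      {q : Quotient (orbitRel (ConjAct G) (commTuples G (m+1))) //
        firstClass q = ConjClasses.mk g} :=
  Quotient.lift (fun y => ⟨Quotient.mk _ (consTuple g y), by simp⟩) (by
    intro y₁ y₂ h
    obtain ⟨z, hz⟩ := h
    apply Subtype.ext
    apply Quotient.sound
    exact ⟨ConjAct.toConjAct ((ConjAct.ofConjAct z : ↥(cent g)) : G),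
      (consTuple_smul g z y₂).symm.trans (congrArg _ hz)⟩)

lemma classMap_bijective {m : ℕ} : Function.Bijective (classMap g (m := m)) := by
  constructor
  · intro q₁ q₂ hq
    induction q₁ using Quotient.inductionOn with | h y₁ => ?_
    induction q₂ using Quotient.inductionOn with | h y₂ => ?_
    have h := Quotient.exact (congrArg Subtype.val hq)
    obtain ⟨k, hk⟩ := h
    set h0 : G := ConjAct.ofConjAct k with hh0
    have hzero : h0 * g * h0⁻¹ = g := by
      have := congrFun (congrArg Subtype.val hk) 0
      rwa [commTuples_smul_coe, consTuple_coe_zero, consTuple_coe_zero] at this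
    have hmem : h0 ∈ (cent g) := by
      refine Subgroup.mem_centralizer_iff.mpr ?_
      intro a ha
      have ha' : a = g := ha
      rw [ha']
      have : h0 * g = g * h0 := by
        conv_rhs => rw [← hzero]
        group
      exact this.symm
    apply Quotient.sound
    refine ⟨ConjAct.toConjAct (⟨h0, hmem⟩ : ↥(cent g)), ?_⟩
    apply Subtype.ext
    funext i
    apply Subtype.ext
    have := congrFun (congrArg Subtype.val hk) i.succ
    rw [commTuples_smul_coe] at this
    simpa [commTuples_smul_coe, ConjAct.smul_def, consTuple] using this
  · rintro ⟨q, hq⟩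
    induction q using Quotient.inductionOn with | h x => ?_
    rw [firstClass_mk, ConjClasses.mk_eq_mk_iff_isConj, isConj_iff] at hq
    obtain ⟨c, hc⟩ := hq
    set x' : commTuples G (m+1) := ConjAct.toConjAct c • x with hx'
    have hx'0 : (x' : Fin (m+1) → G) 0 = g := by
      rw [hx', commTuples_smul_coe, ConjAct.ofConjAct_toConjAct, hc]
    have hmemy : ∀ i : Fin m, (x' : Fin (m+1) → G) i.succ ∈ (cent g) := by
      intro i
      refine Subgroup.mem_centralizer_iff.mpr ?_
      intro a ha
      have ha' : a = g := ha
      rw [ha']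
      have := x'.2 0 i.succ
      rw [hx'0] at this
      exact this
    have hy : (fun i => (⟨(x' : Fin (m+1) → G) i.succ, hmemy i⟩ : ↥(cent g))) ∈
        commTuples (↥(cent g)) m := by
      intro i j
      exact Subtype.ext (x'.2 i.succ j.succ)
    refine ⟨Quotient.mk _ (⟨_, hy⟩ : ↥(commTuples (↥(cent g)) m)), ?_⟩
    apply Subtype.ext
    show Quotient.mk _ (consTuple g ⟨_, hy⟩) = Quotient.mk _ x
    have hcons : consTuple g ⟨_, hy⟩ = x' := by
      apply Subtype.ext
      funext i
      induction i using Fin.cases with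
      | zero => exact hx'0.symm
      | succ i => rfl
    rw [hcons, hx']
    exact Quotient.sound ⟨ConjAct.toConjAct c, rfl⟩

end


/-- Recursion for the number of orbits of commuting tuples: for `n ≥ 1`,
`β_{G,n} = ∑ β_{Z_G(g), n-1}`, the sum over a set of representatives of the
conjugacy classes of `G`. -/
theorem commuting_orbit_count_recursion (G : Type*) [Group G] [Fintype G]
    (n : ℕ) (hn : 1 ≤ n) (r : ConjClasses G → G)
    (hr : ∀ c : ConjClasses G, ConjClasses.mk (r c) = c) :
    betaOrbits G n =
      ∑ᶠ c : ConjClasses G, betaOrbits (Subgroup.centralizer ({r c} : Set G)) (n - 1) := by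
  classical
  obtain ⟨m, rfl⟩ := Nat.exists_eq_succ_of_ne_zero (Nat.one_le_iff_ne_zero.mp hn)
  rw [show m + 1 - 1 = m from rfl]
  have e2 : ∀ c : ConjClasses G,
      {q : Quotient (orbitRel (ConjAct G) (commTuples G (m+1))) // firstClass q = c} ≃
      Quotient (orbitRel (ConjAct ↥(Subgroup.centralizer ({r c} : Set G)))
        (commTuples (↥(Subgroup.centralizer ({r c} : Set G))) m)) := fun c =>
    ((Equiv.subtypeEquivRight (fun q => by rw [hr c])).trans
      (Equiv.ofBijective _ (classMap_bijective (r c) (m := m))).symm)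
  have key : betaOrbits G (m+1) =
      Nat.card (Σ c : ConjClasses G, {q // firstClass (G := G) (m := m) q = c}) :=
    Nat.card_congr (Equiv.sigmaFiberEquiv (firstClass (G := G) (m := m))).symm
  rw [key]
  have hcard : ∀ c : ConjClasses G, Nat.card {q // firstClass (G := G) (m := m) q = c} =
      betaOrbits (Subgroup.centralizer ({r c} : Set G)) m := fun c => Nat.card_congr (e2 c)
  haveI fc : Fintype (ConjClasses G) := Fintype.ofFinite _
  haveI ff : ∀ c : ConjClasses G, Fintype {q // firstClass (G := G) (m := m) q = c} :=
    fun c => Fintype.ofFinite _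
  rw [Nat.card_eq_fintype_card, Fintype.card_sigma, finsum_eq_sum_of_fintype]
  exact Finset.sum_congr rfl fun c _ => by rw [← Nat.card_eq_fintype_card, hcard c]
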